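/- Suppose h_n → h in sup norm, c_n → c in ℝ, and for each n there is b_n ∈ ℝ with E_Q[f*(h_n + b_n)] − b_n ≤ c_n. Then the sequence (b_n) is bounded and has a convergent subsequence whose limit b* satisfies E_Q[f*(h + b*)] − b* ≤ c. -/

import Mathlib

open MeasureTheory Filter ENNReal

/-- Convex conjugate of an extended-real-valued function on ℝ. -/
noncomputable def fStar (f : ℝ → EReal) (s : ℝ) : EReal := ⨆ x : ℝ, ((s * x : ℝ) : EReal) - f x

/-- Positive part of an extended real, as an extended nonnegative real. -/
noncomputable def erealPos (x : EReal) : ℝ≥0∞ := if x = ⊤ then ⊤ else ENNReal.ofReal x.toReal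

/-- Integral of an extended-real-valued function, with values in [-∞,∞]. -/
noncomputable def eintegral {Ω : Type*} [MeasurableSpace Ω] (Q : Measure Ω) (g : Ω → EReal) : EReal :=
  ((∫⁻ x, erealPos (g x) ∂Q) : EReal) - ((∫⁻ x, erealPos (-(g x)) ∂Q) : EReal)

/-- The set B(Ω,Σ) of bounded measurable real-valued functions. -/
def BM (Ω : Type*) [MeasurableSpace Ω] : Set (Ω → ℝ) :=
  {g | Measurable g ∧ ∃ C, ∀ x, |g x| ≤ C}

/-- R(h) = inf_{b ∈ ℝ} ( E_Q[f*(h + b)] − b ). -/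
noncomputable def Rfun {Ω : Type*} [MeasurableSpace Ω] (Q : Measure Ω) (f : ℝ → EReal)
    (h : Ω → ℝ) : EReal :=
  ⨅ b : ℝ, eintegral Q (fun x => fStar f (h x + b)) - (b : EReal)

lemma erealPos_mono : Monotone erealPos := by
  intro x y hxy
  unfold erealPos
  rcases eq_or_ne y ⊤ with rfl | hy
  · simp
  rw [if_neg hy, if_neg (by rintro rfl; exact hy (top_le_iff.mp hxy))]
  rcases eq_or_ne x ⊥ with rfl | hx
  · simp
  exact ENNReal.ofReal_le_ofReal (EReal.toReal_le_toReal hxy hx hy)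

lemma erealPos_coe (r : ℝ) : erealPos (r : EReal) = ENNReal.ofReal r := by
  unfold erealPos; rw [if_neg (by simp), EReal.toReal_coe]

lemma erealPos_le_coe {x : EReal} {r : ℝ} (h : x ≤ (r : EReal)) :
    erealPos x ≤ ENNReal.ofReal r := erealPos_coe r ▸ erealPos_mono h

lemma ennreal_coe_ereal_eq {x : ℝ≥0∞} (hx : x ≠ ⊤) : (x : EReal) = ((x.toReal : ℝ) : EReal) := by
  rw [← EReal.toReal_coe_ennreal]
  exact (EReal.coe_toReal (by simpa using hx) (by simp)).symm
section fStarLemmas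
variable {f : ℝ → EReal}

lemma fStar_ge (f : ℝ → EReal) (s x : ℝ) : ((s * x : ℝ) : EReal) - f x ≤ fStar f s :=
  le_iSup (fun x => ((s * x : ℝ) : EReal) - f x) x

lemma fStar_ge_self (h1 : f 1 = 0) (s : ℝ) : (s : EReal) ≤ fStar f s := by
  have := fStar_ge f s 1
  rw [h1] at this
  simpa using this

lemma fStar_mono (hneg : ∀ x : ℝ, x < 0 → f x = ⊤) : Monotone (fStar f) := by
  intro s t hst
  refine iSup_mono fun x => ?_
  rcases lt_or_ge x 0 with hx | hx
  · rw [hneg x hx]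
    simp
  · exact EReal.sub_le_sub (EReal.coe_le_coe_iff.2 (mul_le_mul_of_nonneg_right hst hx)) le_rfl

lemma fStar_lsc (hbot : ∀ x, f x ≠ ⊥) : LowerSemicontinuous (fStar f) := by
  intro s y hy
  rw [fStar, gt_iff_lt, lt_iSup_iff] at hy
  obtain ⟨x0, hx0⟩ := hy
  rcases eq_or_ne (f x0) ⊤ with htop | htop
  · rw [htop] at hx0
    simp at hx0
  · obtain ⟨r, hr⟩ : ∃ r : ℝ, f x0 = (r : EReal) :=
      ⟨(f x0).toReal, (EReal.coe_toReal htop (hbot x0)).symm⟩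
    rw [hr, ← EReal.coe_sub] at hx0
    have hcont : Continuous fun s' : ℝ => ((s' * x0 - r : ℝ) : EReal) :=
      continuous_coe_real_ereal.comp (by continuity)
    have hopen : IsOpen {s' : ℝ | y < ((s' * x0 - r : ℝ) : EReal)} :=
      isOpen_Ioi.preimage hcont
    filter_upwards [hopen.mem_nhds hx0] with s' hs'
    calc y < ((s' * x0 - r : ℝ) : EReal) := hs'
    _ ≤ fStar f s' := by rw [EReal.coe_sub, ← hr]; exact fStar_ge f s' x0

end fStarLemmas

lemma coe_eq_ofReal_sub_ofReal (a : ℝ) :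
    (a : EReal) = ((ENNReal.ofReal a : ℝ≥0∞) : EReal) - ((ENNReal.ofReal (-a) : ℝ≥0∞) : EReal) := by
  rcases le_total 0 a with ha | ha
  · rw [ENNReal.ofReal_eq_zero.mpr (neg_nonpos.mpr ha)]
    simp [EReal.coe_ennreal_ofReal, max_eq_left ha]
  · rw [ENNReal.ofReal_eq_zero.mpr ha]
    simp [EReal.coe_ennreal_ofReal, max_eq_left (by linarith : (0:ℝ) ≤ -a)]

lemma eintegral_ge_const {Ω : Type*} [MeasurableSpace Ω] (Q : Measure Ω) [IsProbabilityMeasure Q]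
    {g : Ω → EReal} {a : ℝ} (hg : ∀ x, (a : EReal) ≤ g x) : (a : EReal) ≤ eintegral Q g := by
  have hP : ENNReal.ofReal a ≤ ∫⁻ x, erealPos (g x) ∂Q := by
    calc ENNReal.ofReal a = ∫⁻ _, ENNReal.ofReal a ∂Q := by simp
    _ ≤ _ := lintegral_mono fun x => (erealPos_coe a) ▸ erealPos_mono (hg x)
  have hN : (∫⁻ x, erealPos (-(g x)) ∂Q) ≤ ENNReal.ofReal (-a) := by
    calc (∫⁻ x, erealPos (-(g x)) ∂Q) ≤ ∫⁻ _, ENNReal.ofReal (-a) ∂Q :=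
      lintegral_mono fun x => erealPos_le_coe (by rw [EReal.coe_neg]; exact EReal.neg_le_neg_iff.2 (hg x))
    _ = ENNReal.ofReal (-a) := by simp
  rw [coe_eq_ofReal_sub_ofReal a]
  exact EReal.sub_le_sub (EReal.coe_ennreal_le_coe_ennreal_iff.2 hP)
    (EReal.coe_ennreal_le_coe_ennreal_iff.2 hN)



lemma erealPos_shift {y : EReal} {K : ℝ} (hK : 0 ≤ K) (hy : ((-K : ℝ) : EReal) ≤ y) :
    erealPos (y + (K : EReal)) + erealPos (-y) = erealPos y + ENNReal.ofReal K := by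
  induction y using EReal.rec with
  | bot => simp at hy
  | top =>
    rw [EReal.top_add_coe]
    simp [erealPos]
  | coe r =>
    have hr : -K <= r := EReal.coe_le_coe_iff.1 hy
    rw [← EReal.coe_add, ← EReal.coe_neg, erealPos_coe, erealPos_coe, erealPos_coe]
    rcases le_total 0 r with h0 | h0
    · rw [ENNReal.ofReal_eq_zero.mpr (neg_nonpos.mpr h0), add_zero, ENNReal.ofReal_add h0 hK]
    · rw [ENNReal.ofReal_eq_zero.mpr h0, zero_add, ← ENNReal.ofReal_add (by linarith) (by linarith)]
      ring_nf

lemma eintegral_le_iff_shift {Ω : Type*} [MeasurableSpace Ω] (Q : Measure Ω) [IsProbabilityMeasure Q]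
    {g : Ω → EReal} {K : ℝ} (hK : 0 ≤ K) (hg : ∀ x, (-K : ℝ) ≤ g x)
    (hmeas : Measurable fun x => erealPos (-(g x))) :
    eintegral Q g = ((∫⁻ x, erealPos (g x + (K : EReal)) ∂Q : ℝ≥0∞) : EReal) - (K : EReal) := by
  set S := ∫⁻ x, erealPos (g x + (K : EReal)) ∂Q with hS
  set P := ∫⁻ x, erealPos (g x) ∂Q with hP
  set N := ∫⁻ x, erealPos (-(g x)) ∂Q with hN
  have hgneg : ∀ x, -(g x) ≤ (K : EReal) := fun x => by
    have := hg x
    rw [EReal.coe_neg] at this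
    simpa using EReal.neg_le_neg_iff.2 this
  have hNle : N ≤ ENNReal.ofReal K := by
    calc N ≤ ∫⁻ _, ENNReal.ofReal K ∂Q := lintegral_mono fun x => erealPos_le_coe (hgneg x)
    _ = ENNReal.ofReal K := by simp
  have hNtop : N ≠ ⊤ := ne_top_of_le_ne_top ENNReal.ofReal_ne_top hNle
  have key : S + N = P + ENNReal.ofReal K := by
    calc S + N = ∫⁻ x, (erealPos (g x + (K : EReal)) + erealPos (-(g x))) ∂Q :=
      (lintegral_add_right _ hmeas).symm
    _ = ∫⁻ x, (erealPos (g x) + ENNReal.ofReal K) ∂Q :=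
        lintegral_congr fun x => erealPos_shift hK (hg x)
    _ = P + ENNReal.ofReal K := by rw [lintegral_add_right _ measurable_const]; simp [hP]
  rw [eintegral, ← hP, ← hN]
  rcases eq_or_ne P ⊤ with hPtop | hPtop
  · have hStop : S = ⊤ := by
      by_contra hS'
      exact (ENNReal.add_ne_top.2 ⟨hS', hNtop⟩) (by rw [key, hPtop, top_add])
    rw [hPtop, hStop, ennreal_coe_ereal_eq hNtop]
    simp [EReal.top_sub_coe]
  · have hStop : S ≠ ⊤ := by
      intro hS'
      rw [hS', top_add] at key
      exact (ENNReal.add_ne_top.2 ⟨hPtop, ENNReal.ofReal_ne_top⟩) key.symm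
    have htR : S.toReal + N.toReal = P.toReal + K := by
      have := congrArg ENNReal.toReal key
      rwa [ENNReal.toReal_add hStop hNtop, ENNReal.toReal_add hPtop ENNReal.ofReal_ne_top,
        ENNReal.toReal_ofReal hK] at this
    rw [ennreal_coe_ereal_eq hNtop, ennreal_coe_ereal_eq hPtop, ennreal_coe_ereal_eq hStop,
      ← EReal.coe_sub, ← EReal.coe_sub, EReal.coe_eq_coe_iff]
    linarith
lemma erealPos_add_lt_dense {A : EReal} {K : ℝ} {t : ℝ≥0∞}
    (ht : t < erealPos (A + (K : EReal))) :
    ∃ q : ℝ, (q : EReal) < A ∧ t < erealPos ((q : ℝ) + (K : EReal)) := by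
  have httop : t ≠ ⊤ := ht.ne_top
  induction A using EReal.rec with
  | bot =>
    rw [show (⊥ : EReal) + (K : EReal) = ⊥ from rfl] at ht
    simp [erealPos] at ht
  | top =>
    refine ⟨t.toReal + |K| + 1, EReal.coe_lt_top _, ?_⟩
    rw [← EReal.coe_add, erealPos_coe]
    rw [ENNReal.lt_ofReal_iff_toReal_lt httop]
    have := neg_abs_le K
    linarith
  | coe r =>
    rw [← EReal.coe_add, erealPos_coe] at ht
    have h1 : t.toReal < r + K := ENNReal.toReal_lt_of_lt_ofReal ht
    set d := min 1 (r + K - t.toReal) with hd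
    have hd0 : 0 < d := lt_min one_pos (by linarith)
    refine ⟨r - d / 2, by exact_mod_cast sub_lt_self r (by linarith), ?_⟩
    rw [← EReal.coe_add, erealPos_coe, ENNReal.lt_ofReal_iff_toReal_lt httop]
    have : d ≤ r + K - t.toReal := min_le_right _ _
    linarith
lemma liminf_key {f : ℝ → EReal} (hbot : ∀ x, f x ≠ ⊥) (K : ℝ)
    {s : ℝ} {sn : ℕ → ℝ} (hs : Tendsto sn atTop (nhds s)) :
    erealPos (fStar f s + (K : EReal)) ≤
      liminf (fun n => erealPos (fStar f (sn n) + (K : EReal))) atTop := by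
  by_contra hcon
  push_neg at hcon
  obtain ⟨t, h1, h2⟩ := exists_between hcon
  obtain ⟨q, hq1, hq2⟩ := erealPos_add_lt_dense h2
  have hev : ∀ᶠ n in atTop, (q : EReal) < fStar f (sn n) :=
    hs.eventually (fStar_lsc hbot s (q : EReal) hq1)
  have hev2 : ∀ᶠ n in atTop, t ≤ erealPos (fStar f (sn n) + (K : EReal)) :=
    hev.mono fun n hn => le_trans hq2.le (erealPos_mono (add_le_add_left hn.le _))
  exact absurd (le_liminf_of_le (by isBoundedDefault) hev2) (not_le.2 h1)
lemma bdd_of_eventually {u : ℕ → ℝ} {N : ℕ} {C : ℝ} (h : ∀ n, N ≤ n → |u n| ≤ C) :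
    ∃ M, C ≤ M ∧ ∀ n, |u n| ≤ M := by
  refine ⟨max C ((Finset.range (N+1)).sup' Finset.nonempty_range_add_one fun i => |u i|),
    le_max_left _ _, fun n => ?_⟩
  rcases le_or_gt N n with h' | h'
  · exact le_max_of_le_left (h n h')
  · exact le_max_of_le_right
      (Finset.le_sup' (fun i => |u i|) (Finset.mem_range.2 (by omega)))


/-- If h_n → h uniformly, c_n → c, and E_Q[f*(h_n + b_n)] − b_n ≤ c_n, then (b_n) is bounded
and has a convergent subsequence whose limit b* satisfies E_Q[f*(h + b*)] − b* ≤ c. -/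
theorem bseq_bounded_subseq {Ω : Type*} [MeasurableSpace Ω]
    (Q : Measure Ω) [IsProbabilityMeasure Q] (f : ℝ → EReal)
    (hlsc : LowerSemicontinuous f)
    (hconv : ∀ (x y a b : ℝ), 0 < a → 0 < b → a + b = 1 →
      f (a * x + b * y) ≤ (a : EReal) * f x + (b : EReal) * f y)
    (hbot : ∀ x, f x ≠ ⊥) (h1 : f 1 = 0) (hneg : ∀ x : ℝ, x < 0 → f x = ⊤)
    (hfin : ∃ ε > (0:ℝ), ∀ x : ℝ, |x - 1| < ε → f x ≠ ⊤)
    (h : Ω → ℝ) (hh : h ∈ BM Ω) (hn : ℕ → Ω → ℝ) (hhn : ∀ n, hn n ∈ BM Ω)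
    (hunif : TendstoUniformly hn h atTop)
    (c : ℝ) (cn : ℕ → ℝ) (hc : Tendsto cn atTop (nhds c))
    (b : ℕ → ℝ)
    (hb : ∀ n, eintegral Q (fun x => fStar f (hn n x + b n)) - (b n : EReal) ≤ (cn n : EReal)) :
    (∃ M, ∀ n, |b n| ≤ M) ∧
    ∃ (φ : ℕ → ℕ) (bstar : ℝ), StrictMono φ ∧ Tendsto (fun n => b (φ n)) atTop (nhds bstar) ∧
      eintegral Q (fun x => fStar f (h x + bstar)) - (bstar : EReal) ≤ (c : EReal) := by
  have hΩ : Nonempty Ω := by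
    rcases isEmpty_or_nonempty Ω with hE | hN
    · have h01 : (Q Set.univ) = 1 := measure_univ
      rw [Set.univ_eq_empty_iff.2 hE] at h01
      simp at h01
    · exact hN
  obtain ⟨hmeas_h, Ch, hCh⟩ := hh
  have hmeas_n : ∀ n, Measurable (hn n) := fun n => (hhn n).1
  choose Bn hBn using fun n => (hhn n).2
  -- uniform bound C on h and all hn
  obtain ⟨N0, hN0⟩ := eventually_atTop.1 ((Metric.tendstoUniformly_iff.1 hunif) 1 one_pos)
  set C : ℝ := max (Ch + 1) ((Finset.range (N0+1)).sup' Finset.nonempty_range_add_one Bn) with hC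
  have hCh' : ∀ x, |h x| ≤ C := fun x =>
    le_trans (hCh x) (le_trans (by linarith) (le_max_left _ _))
  have hCn : ∀ n x, |hn n x| ≤ C := by
    intro n x
    rcases le_or_gt N0 n with h' | h'
    · have hd := hN0 n h' x
      rw [Real.dist_eq] at hd
      have : |hn n x| ≤ |h x| + 1 := by
        have := abs_sub_abs_le_abs_sub (hn n x) (h x)
        rw [abs_sub_comm] at this
        linarith [abs_nonneg (hn n x)]
      exact le_trans this (le_trans (by linarith [hCh x]) (le_max_left _ _))
    · exact le_trans (hBn n x) (le_max_of_le_right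
        (Finset.le_sup' Bn (Finset.mem_range.2 (by omega))))
  have hCh0 : 0 ≤ Ch := le_trans (abs_nonneg _) (hCh (Classical.arbitrary Ω))
  have hC0 : 0 < C := lt_of_lt_of_le (by linarith) (le_max_left _ _)
  -- bound on cn
  obtain ⟨Nc, hNc⟩ := (Metric.tendsto_atTop.1 hc) 1 one_pos
  obtain ⟨Cc, hCcge, hCc⟩ := bdd_of_eventually (u := cn) (N := Nc) (C := |c| + 1)
    (fun n hn' => by
      have hd := hNc n hn'
      rw [Real.dist_eq] at hd
      have := abs_sub_abs_le_abs_sub (cn n) c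
      linarith)
  have hCc0 : 0 ≤ Cc := le_trans (by positivity) hCcge
  -- delta and the two points
  obtain ⟨ε, hε, hfin'⟩ := hfin
  set δ : ℝ := min (ε/2) (1/2) with hδ
  have hδ0 : 0 < δ := lt_min (by linarith) (by norm_num)
  have hδhalf : δ ≤ 1/2 := min_le_right _ _
  have hδε : δ < ε := lt_of_le_of_lt (min_le_left _ _) (by linarith)
  -- key chain inequality
  have key : ∀ (xj : ℝ) (rj : ℝ), 0 ≤ xj → f xj = (rj : EReal) → ∀ n,
      (b n - C) * xj - rj - b n ≤ cn n := by
    intro xj rj hxj hrj n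
    have hpt : ∀ x, (((b n - C) * xj - rj : ℝ) : EReal) ≤ fStar f (hn n x + b n) := by
      intro x
      have hwx : -C ≤ hn n x := neg_le_of_abs_le (hCn n x)
      have h2 : ((b n - C) * xj - rj : ℝ) ≤ ((hn n x + b n) * xj - rj : ℝ) := by
        nlinarith [mul_le_mul_of_nonneg_right (by linarith : b n - C ≤ hn n x + b n) hxj]
      calc (((b n - C) * xj - rj : ℝ) : EReal)
          ≤ (((hn n x + b n) * xj - rj : ℝ) : EReal) := EReal.coe_le_coe_iff.2 h2
        _ = (((hn n x + b n) * xj : ℝ) : EReal) - f xj := by rw [hrj, ← EReal.coe_sub]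
        _ ≤ fStar f (hn n x + b n) := fStar_ge f _ xj
    have h3 := eintegral_ge_const Q hpt
    have h4 : (((b n - C) * xj - rj : ℝ) : EReal) - ((b n : ℝ) : EReal) ≤ ((cn n : ℝ) : EReal) :=
      le_trans (EReal.sub_le_sub h3 le_rfl) (hb n)
    rw [← EReal.coe_sub] at h4
    exact EReal.coe_le_coe_iff.1 h4
  have hx0 : f (1 + δ) ≠ ⊤ := hfin' _ (by rw [add_sub_cancel_left, abs_of_pos hδ0]; exact hδε)
  have hx1 : f (1 - δ) ≠ ⊤ := hfin' _ (by
    rw [show (1 - δ - 1 : ℝ) = -δ by ring, abs_neg, abs_of_pos hδ0]; exact hδε)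
  set r0 : ℝ := (f (1+δ)).toReal with hr0def
  have hr0 : f (1+δ) = (r0 : EReal) := (EReal.coe_toReal hx0 (hbot _)).symm
  set r1 : ℝ := (f (1-δ)).toReal with hr1def
  have hr1 : f (1-δ) = (r1 : EReal) := (EReal.coe_toReal hx1 (hbot _)).symm
  have k0 := key (1+δ) r0 (by linarith) hr0
  have k1 := key (1-δ) r1 (by linarith) hr1
  set D : ℝ := Cc + 2*C + |r0| + |r1| + 1 with hD
  have hD0 : 0 < D := by positivity
  set M : ℝ := D / δ with hMdef
  have hM : ∀ n, |b n| ≤ M := by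
    intro n
    have hk0 := k0 n
    have hk1 := k1 n
    have hcn := abs_le.1 (hCc n)
    have hrr0 := le_abs_self r0
    have hrr1 := le_abs_self r1
    rw [abs_le]
    constructor
    · rw [neg_le]
      rw [show M = D / δ from rfl, le_div_iff₀ hδ0]
      nlinarith [abs_nonneg r0]
    · rw [show M = D / δ from rfl, le_div_iff₀ hδ0]
      nlinarith [abs_nonneg r1]
  refine ⟨⟨M, hM⟩, ?_⟩
  -- Bolzano-Weierstrass
  obtain ⟨bstar, hbmem, φ, hφ, hbφ⟩ := tendsto_subseq_of_bounded
    (Metric.isBounded_Icc (-M) M) (fun n => Set.mem_Icc.2 (abs_le.1 (hM n)))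
  have hbstar : |bstar| ≤ M := by
    rw [IsClosed.closure_eq isClosed_Icc] at hbmem
    exact abs_le.2 (Set.mem_Icc.1 hbmem)
  refine ⟨φ, bstar, hφ, hbφ, ?_⟩
  have hM0 : 0 ≤ M := le_trans (abs_nonneg _) (hM 0)
  set K : ℝ := C + M + 1 with hKdef
  have hK0 : 0 ≤ K := by linarith
  have mono_fS : Monotone (fStar f) := fStar_mono hneg
  have mono_u : Monotone (fun y : ℝ => erealPos (fStar f y + (K : EReal))) :=
    fun y z hyz => erealPos_mono (add_le_add_left (mono_fS hyz) _)
  have anti_v : Antitone (fun y : ℝ => erealPos (-(fStar f y))) :=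
    fun y z hyz => erealPos_mono (EReal.neg_le_neg_iff.2 (mono_fS hyz))
  have meas_u : ∀ (w : Ω → ℝ) (β : ℝ), Measurable w →
      Measurable (fun x => erealPos (fStar f (w x + β) + (K : EReal))) :=
    fun w β hw => mono_u.measurable.comp (hw.add_const β)
  have meas_v : ∀ (w : Ω → ℝ) (β : ℝ), Measurable w →
      Measurable (fun x => erealPos (-(fStar f (w x + β)))) :=
    fun w β hw => anti_v.measurable.comp (hw.add_const β)
  have hglb : ∀ (w : Ω → ℝ) (β : ℝ), (∀ x, |w x| ≤ C) → |β| ≤ M →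
      ∀ x, ((-K : ℝ) : EReal) ≤ fStar f (w x + β) := by
    intro w β hwC hβ x
    refine le_trans ?_ (fStar_ge_self h1 (w x + β))
    exact EReal.coe_le_coe_iff.2
      (by linarith [neg_le_of_abs_le (hwC x), neg_le_of_abs_le hβ])
  have hform : ∀ (w : Ω → ℝ) (β : ℝ), Measurable w → (∀ x, |w x| ≤ C) → |β| ≤ M →
      eintegral Q (fun x => fStar f (w x + β)) =
        ((∫⁻ x, erealPos (fStar f (w x + β) + (K : EReal)) ∂Q : ℝ≥0∞) : EReal) - (K : EReal) :=
    fun w β hw hwC hβ => eintegral_le_iff_shift Q hK0 (hglb w β hwC hβ) (meas_v w β hw)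
  have hSb : ∀ n, (∫⁻ x, erealPos (fStar f (hn n x + b n) + (K : EReal)) ∂Q) ≤
      ENNReal.ofReal (cn n + b n + K) := by
    intro n
    set S := ∫⁻ x, erealPos (fStar f (hn n x + b n) + (K : EReal)) ∂Q with hSdef
    have hineq := hb n
    rw [hform (hn n) (b n) (hmeas_n n) (hCn n) (hM n), ← hSdef] at hineq
    rcases eq_or_ne S ⊤ with hStop | hStop
    · rw [hStop, EReal.coe_ennreal_top, EReal.top_sub_coe, EReal.top_sub_coe] at hineq
      exact absurd hineq (by simp)
    · rw [ennreal_coe_ereal_eq hStop, ← EReal.coe_sub, ← EReal.coe_sub] at hineq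
      have hreal := EReal.coe_le_coe_iff.1 hineq
      calc S = ENNReal.ofReal S.toReal := (ENNReal.ofReal_toReal hStop).symm
        _ ≤ _ := ENNReal.ofReal_le_ofReal (by linarith)
  have hlb : ∀ n, -(C + M) ≤ cn n + b n := by
    intro n
    have hpt : ∀ x, ((-(C + M) : ℝ) : EReal) ≤ fStar f (hn n x + b n) := fun x =>
      le_trans (EReal.coe_le_coe_iff.2
        (by linarith [neg_le_of_abs_le (hCn n x), neg_le_of_abs_le (hM n)]))
        (fStar_ge_self h1 _)
    have h3 := eintegral_ge_const Q hpt
    have h4 : ((-(C+M) : ℝ) : EReal) - ((b n : ℝ) : EReal) ≤ ((cn n : ℝ) : EReal) :=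
      le_trans (EReal.sub_le_sub h3 le_rfl) (hb n)
    rw [← EReal.coe_sub] at h4
    have := EReal.coe_le_coe_iff.1 h4
    linarith
  have hptt : ∀ x, Tendsto (fun n => hn (φ n) x + b (φ n)) atTop (nhds (h x + bstar)) :=
    fun x => Tendsto.add ((hunif.tendsto_at x).comp hφ.tendsto_atTop) hbφ
  have hF1 : (∫⁻ x, erealPos (fStar f (h x + bstar) + (K : EReal)) ∂Q) ≤
      liminf (fun n => ∫⁻ x, erealPos (fStar f (hn (φ n) x + b (φ n)) + (K : EReal)) ∂Q)
        atTop := by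
    calc (∫⁻ x, erealPos (fStar f (h x + bstar) + (K : EReal)) ∂Q)
        ≤ ∫⁻ x, liminf
            (fun n => erealPos (fStar f (hn (φ n) x + b (φ n)) + (K : EReal))) atTop ∂Q :=
          lintegral_mono fun x => liminf_key hbot K (hptt x)
      _ ≤ _ := lintegral_liminf_le fun n => meas_u (hn (φ n)) (b (φ n)) (hmeas_n (φ n))
  have hφtend : Tendsto (fun n => cn (φ n) + b (φ n) + K) atTop (nhds (c + bstar + K)) :=
    Tendsto.add_const K (Tendsto.add (hc.comp hφ.tendsto_atTop) hbφ)
  have hF2 : liminf (fun n => ∫⁻ x, erealPos (fStar f (hn (φ n) x + b (φ n)) + (K : EReal)) ∂Q)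
      atTop ≤ ENNReal.ofReal (c + bstar + K) := by
    calc liminf (fun n => ∫⁻ x, erealPos (fStar f (hn (φ n) x + b (φ n)) + (K : EReal)) ∂Q) atTop
        ≤ liminf (fun n => ENNReal.ofReal (cn (φ n) + b (φ n) + K)) atTop :=
          liminf_le_liminf (Eventually.of_forall fun n => hSb (φ n))
      _ = _ := (ENNReal.tendsto_ofReal hφtend).liminf_eq
  have hcbK : 0 ≤ c + bstar + K := by
    have hgl : -(C+M) ≤ c + bstar :=
      ge_of_tendsto (Tendsto.add (hc.comp hφ.tendsto_atTop) hbφ)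
        (Eventually.of_forall fun n => hlb (φ n))
    linarith
  rw [hform h bstar hmeas_h hCh' hbstar]
  have hSfin : ((∫⁻ x, erealPos (fStar f (h x + bstar) + (K : EReal)) ∂Q : ℝ≥0∞) : EReal)
      ≤ ((c + bstar + K : ℝ) : EReal) := by
    refine le_trans (EReal.coe_ennreal_le_coe_ennreal_iff.2 (le_trans hF1 hF2)) ?_
    rw [EReal.coe_ennreal_ofReal]
    exact le_of_eq (by exact_mod_cast max_eq_left hcbK)
  calc ((∫⁻ x, erealPos (fStar f (h x + bstar) + (K : EReal)) ∂Q : ℝ≥0∞) : EReal)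
        - (K : EReal) - (bstar : EReal)
      ≤ ((c + bstar + K : ℝ) : EReal) - (K : EReal) - (bstar : EReal) :=
        EReal.sub_le_sub (EReal.sub_le_sub hSfin le_rfl) le_rfl
    _ = (c : EReal) := by
        rw [← EReal.coe_sub, ← EReal.coe_sub]
        exact EReal.coe_eq_coe_iff.2 (by ring)
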